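/- arXiv:1707.08744 — 2 statements merged into one kernel-verified Lean document; each statement's English description precedes it below -/
import Mathlib

section
/- Failure of the Sure Thing Principle on conditional neighbourhood models: there exist a conditional neighbourhood model M (with a single agent a), a world w of M, and propositional letters p, q such that M,w ⊨ B_a(p,q), M,w ⊨ B_a(¬p,q), and M,w ⊨ B_a(⊤,¬q); in particular the formula B_a(p,q) ∧ B_a(¬p,q) → B_a(⊤,q) is not valid on conditional neighbourhood models. -/
/-- The knowledge cell of agent `a` at world `w`, derived from the
conditional neighbourhood function `N`:
`[w]_a = {v | ∀ X ⊆ W, N_a^w(X) = N_a^v(X)}`. -/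
def cellOf {Agt W : Type} (N : Agt → W → Set W → Set (Set W)) (a : Agt) (w : W) : Set W :=
  {v | ∀ X : Set W, N a w X = N a v X}

/-- A conditional neighbourhood model `(W, N, V)`. -/
structure CNModel (Agt Prp W : Type) : Type where
  nonempty : Nonempty W
  N : Agt → W → Set W → Set (Set W)
  V : Prp → Set W
  cond_c : ∀ a w X, ∀ Y ∈ N a w X, Y ⊆ X ∩ cellOf N a w
  cond_ec : ∀ a w (X Y : Set W), X ∩ cellOf N a w = Y ∩ cellOf N a w → N a w X = N a w Y
  cond_d : ∀ a w X, ∀ Y ∈ N a w X, (X ∩ cellOf N a w) \ Y ∉ N a w X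
  cond_sc : ∀ a w (X Y Z : Set W), Y ⊆ X ∩ cellOf N a w → Z ⊆ X ∩ cellOf N a w →
      (X ∩ cellOf N a w) \ Y ∉ N a w X → Y ⊂ Z → Z ∈ N a w X

/-- The language L_CN: `φ ::= ⊤ | p | ¬φ | (φ∧φ) | B_a(φ,φ)`. -/
inductive CNForm (Agt Prp : Type) : Type
  | top : CNForm Agt Prp
  | atom : Prp → CNForm Agt Prp
  | neg : CNForm Agt Prp → CNForm Agt Prp
  | and : CNForm Agt Prp → CNForm Agt Prp → CNForm Agt Prp
  | bel : Agt → CNForm Agt Prp → CNForm Agt Prp → CNForm Agt Prp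

/-- Truth of an L_CN formula at a world of a conditional neighbourhood model.
`B_a(φ,ψ)` holds at `w` iff some `Y ∈ N_a^w(⟦φ⟧)` satisfies `Y ⊆ ⟦ψ⟧`. -/
def CNModel.truth {Agt Prp W : Type} (M : CNModel Agt Prp W) : CNForm Agt Prp → W → Prop
  | .top, _ => True
  | .atom p, w => w ∈ M.V p
  | .neg φ, w => ¬ M.truth φ w
  | .and φ ψ, w => M.truth φ w ∧ M.truth ψ w
  | .bel a φ ψ, w => ∃ Y ∈ M.N a w {v | M.truth φ v}, Y ⊆ {v | M.truth ψ v}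

/-- Material implication in L_CN: `φ → ψ := ¬(φ ∧ ¬ψ)`. -/
def CNForm.imp {Agt Prp : Type} (φ ψ : CNForm Agt Prp) : CNForm Agt Prp :=
  .neg (.and φ (.neg ψ))

open Classical in
noncomputable def mySel (X : Set (Fin 4)) : Fin 4 :=
  if X = {0, 1} then 0
  else if X = {2, 3} then 2
  else if X = Set.univ then 1
  else if h : X.Nonempty then h.choose else 0

lemma mySel_mem {X : Set (Fin 4)} (h : X.Nonempty) : mySel X ∈ X := by
  unfold mySel
  split_ifs with h1 h2 h3
  · subst h1; simp
  · subst h2; simp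
  · subst h3; simp
  · exact h.choose_spec

lemma mySel_01 : mySel {0, 1} = 0 := by simp [mySel]

lemma ne_23_01 : ({2, 3} : Set (Fin 4)) ≠ {0, 1} := by
  intro h
  have h0 : (2 : Fin 4) ∈ ({2, 3} : Set (Fin 4)) := by simp
  rw [h] at h0
  simp [Set.mem_insert_iff] at h0

lemma ne_univ_01 : (Set.univ : Set (Fin 4)) ≠ {0, 1} := by
  intro h
  have h0 : (2 : Fin 4) ∈ (Set.univ : Set (Fin 4)) := by simp
  rw [h] at h0
  simp [Set.mem_insert_iff] at h0

lemma ne_univ_23 : (Set.univ : Set (Fin 4)) ≠ {2, 3} := by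
  intro h
  have h0 : (0 : Fin 4) ∈ (Set.univ : Set (Fin 4)) := by simp
  rw [h] at h0
  simp [Set.mem_insert_iff] at h0

lemma mySel_23 : mySel {2, 3} = 2 := by
  unfold mySel
  rw [if_neg ne_23_01, if_pos rfl]

lemma mySel_univ : mySel Set.univ = 1 := by
  unfold mySel
  rw [if_neg ne_univ_01, if_neg ne_univ_23, if_pos rfl]

def myN (X : Set (Fin 4)) : Set (Set (Fin 4)) := {Y | Y ⊆ X ∧ mySel X ∈ Y}

lemma cell_univ {Agt : Type} (a : Agt) (w : Fin 4) :
    cellOf (fun _ _ X => myN X) a w = Set.univ := by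
  ext v; simp [cellOf]

noncomputable def myM (Agt Prp : Type) (p q : Prp) : CNModel Agt Prp (Fin 4) where
  nonempty := ⟨0⟩
  N := fun _ _ X => myN X
  V := fun r => by classical exact if r = p then {0, 1} else if r = q then {0, 2} else ∅
  cond_c := by
    intro a w X Y hY
    rw [cell_univ, Set.inter_univ]
    exact hY.1
  cond_ec := by
    intro a w X Y h
    rw [cell_univ, Set.inter_univ, Set.inter_univ] at h
    rw [h]
  cond_d := by
    intro a w X Y hY h2
    rw [cell_univ, Set.inter_univ] at h2
    exact h2.2.2 hY.2
  cond_sc := by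
    intro a w X Y Z hY hZ hnot hYZ
    rw [cell_univ, Set.inter_univ] at hY hZ hnot
    obtain ⟨x, hxZ, hxY⟩ := Set.exists_of_ssubset hYZ
    have hXne : X.Nonempty := ⟨x, hZ hxZ⟩
    have hsX := mySel_mem hXne
    have hsY : mySel X ∈ Y := by
      by_contra hs
      exact hnot ⟨Set.diff_subset, hsX, hs⟩
    exact ⟨hZ, hYZ.1 hsY⟩

/-- Failure of the Sure Thing Principle on conditional neighbourhood models:
there are a conditional neighbourhood model, a world `w` and distinct letters
`p`, `q` with `M,w ⊨ B_a(p,q)`, `M,w ⊨ B_a(¬p,q)` and `M,w ⊨ B_a(⊤,¬q)`;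
in particular `B_a(p,q) ∧ B_a(¬p,q) → B_a(⊤,q)` fails at `w`, so it is not
valid on conditional neighbourhood models. -/
theorem sure_thing_fails {Agt Prp : Type} (a : Agt) (p q : Prp) (hpq : p ≠ q) :
    ∃ (W : Type) (M : CNModel Agt Prp W) (w : W),
      M.truth (.bel a (.atom p) (.atom q)) w ∧
      M.truth (.bel a (.neg (.atom p)) (.atom q)) w ∧
      M.truth (.bel a .top (.neg (.atom q))) w ∧
      ¬ M.truth
          (CNForm.imp (.and (.bel a (.atom p) (.atom q)) (.bel a (.neg (.atom p)) (.atom q)))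
            (.bel a .top (.atom q))) w := by
  classical
  set M := myM Agt Prp p q with hM
  have hVp : M.V p = ({0, 1} : Set (Fin 4)) := by simp [hM, myM]
  have hVq : M.V q = ({0, 2} : Set (Fin 4)) := by simp [hM, myM, Ne.symm hpq]
  have hP : {v | M.truth (.atom p) v} = ({0, 1} : Set (Fin 4)) := by
    ext v; simp [CNModel.truth, hVp]
  have hQ : {v | M.truth (.atom q) v} = ({0, 2} : Set (Fin 4)) := by
    ext v; simp [CNModel.truth, hVq]
  have hNP : {v | M.truth (.neg (.atom p)) v} = ({2, 3} : Set (Fin 4)) := by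
    ext v
    simp only [CNModel.truth, hVp, Set.mem_setOf_eq, Set.mem_insert_iff, Set.mem_singleton_iff]
    fin_cases v <;> simp
  have hNQ : {v | M.truth (.neg (.atom q)) v} = ({1, 3} : Set (Fin 4)) := by
    ext v
    simp only [CNModel.truth, hVq, Set.mem_setOf_eq, Set.mem_insert_iff, Set.mem_singleton_iff]
    fin_cases v <;> simp
  have hT : {v | M.truth .top v} = (Set.univ : Set (Fin 4)) := by
    ext v; simp [CNModel.truth]
  have hN : ∀ (w : Fin 4) (X : Set (Fin 4)), M.N a w X = myN X := fun _ _ => rfl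
  have h1 : M.truth (.bel a (.atom p) (.atom q)) 0 := by
    refine ⟨{0}, ?_, ?_⟩
    · rw [hN, hP]
      exact ⟨by simp, by rw [mySel_01]; simp⟩
    · rw [hQ]; simp
  have h2 : M.truth (.bel a (.neg (.atom p)) (.atom q)) 0 := by
    refine ⟨{2}, ?_, ?_⟩
    · rw [hN, hNP]
      exact ⟨by simp, by rw [mySel_23]; simp⟩
    · rw [hQ]; simp
  have h3 : M.truth (.bel a .top (.neg (.atom q))) 0 := by
    refine ⟨{1}, ?_, ?_⟩
    · rw [hN, hT]
      exact ⟨by simp, by rw [mySel_univ]; simp⟩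
    · rw [hNQ]; simp
  have h4 : ¬ M.truth (.bel a .top (.atom q)) 0 := by
    rintro ⟨Y, hYmem, hYq⟩
    rw [hN, hT] at hYmem
    have h1Y : (1 : Fin 4) ∈ Y := by
      have := hYmem.2; rwa [mySel_univ] at this
    have := hYq h1Y
    rw [hQ] at this
    simp [Set.mem_insert_iff] at this
  refine ⟨Fin 4, M, 0, h1, h2, h3, ?_⟩
  intro himp
  exact himp ⟨⟨h1, h2⟩, h4⟩
end

section
/- Comparison determinacy: for every conditional neighbourhood model M, world w, agent a, and L_CN formulas α, β, the formula B_a(α↔¬β, α) → ¬B_a(α↔¬β, β) is true at w; i.e. writing α ≻_a β for B_a(α↔¬β, α), the formula (α ≻_a β) → ¬(β ≻_a α) is valid on conditional neighbourhood models. -/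
/-- Biconditional in L_CN. -/
def CNForm.iff {Agt Prp : Type} (φ ψ : CNForm Agt Prp) : CNForm Agt Prp :=
  .and (φ.imp ψ) (ψ.imp φ)

/-- Comparison determinacy: writing `α ≻_a β` for `B_a(α↔¬β, α)`,
`(α ≻_a β) → ¬(β ≻_a α)` is valid on conditional neighbourhood models. -/
theorem cn_comparison_determinacy {Agt Prp W : Type} (M : CNModel Agt Prp W)
    (w : W) (a : Agt) (α β : CNForm Agt Prp)
    (h : M.truth (.bel a (α.iff (.neg β)) α) w) :
    ¬ M.truth (.bel a (α.iff (.neg β)) β) w := by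
  rintro ⟨Z, hZN, hZβ⟩
  obtain ⟨Y, hYN, hYα⟩ := h
  set X : Set W := {v | M.truth (CNForm.iff α (.neg β)) v} with hX
  have hYD := M.cond_c a w X Y hYN
  have hZD := M.cond_c a w X Z hZN
  have hdis : ∀ v ∈ Z, v ∉ Y := by
    intro v hvZ hvY
    have hvX : v ∈ X := (hYD hvY).1
    have hv : ¬ (M.truth α v ∧ M.truth β v) := by
      simp only [hX, CNForm.iff, CNForm.imp, CNModel.truth, Set.mem_setOf_eq] at hvX
      tauto
    exact hv ⟨hYα hvY, hZβ hvZ⟩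
  have hZsub : Z ⊆ (X ∩ cellOf M.N a w) \ Y := fun v hv => ⟨hZD hv, hdis v hv⟩
  have hdY := M.cond_d a w X Y hYN
  rcases hZsub.ssubset_or_eq with hss | heq
  · have hdZ := M.cond_d a w X Z hZN
    exact hdY (M.cond_sc a w X Z ((X ∩ cellOf M.N a w) \ Y) hZD Set.diff_subset hdZ hss)
  · exact hdY (heq ▸ hZN)
end
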